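/- arXiv:2210.05846 — 4 statements merged into one kernel-verified Lean document; each statement's English description precedes it below -/
import Mathlib

section
/- Let w ∈ ℝ, u = w - ⌊w⌋, and let f(v) = Σ_{i=1}^n l_i² (a_i + c_i (v - w))² for fixed reals l_i, a_i, c_i. Then min(f(⌊w⌋), f(⌈w⌉)) ≤ Σ_{i=1}^n l_i² a_i² + Σ_{i=1}^n l_i² c_i² u(1-u). -/
/-- Rounding one coordinate: min over v ∈ {⌊w⌋, ⌊w⌋+1} of
f(v) = Σ l_i² (a_i + c_i (v - w))² is at most Σ l_i² a_i² + Σ l_i² c_i² u(1-u),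
where u = w - ⌊w⌋. -/
theorem min_floor_ceil_bound (n : ℕ) (l a c : ℕ → ℝ) (w : ℝ) :
    min
      (∑ i ∈ Finset.range n, (l i) ^ 2 * (a i + c i * ((⌊w⌋ : ℝ) - w)) ^ 2)
      (∑ i ∈ Finset.range n, (l i) ^ 2 * (a i + c i * (((⌊w⌋ : ℝ) + 1) - w)) ^ 2)
    ≤ (∑ i ∈ Finset.range n, (l i) ^ 2 * (a i) ^ 2)
      + (∑ i ∈ Finset.range n, (l i) ^ 2 * (c i) ^ 2) * ((w - ⌊w⌋) * (1 - (w - ⌊w⌋))) := by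
  set u : ℝ := w - ⌊w⌋ with hu
  have hu0 : 0 ≤ u := by
    have := Int.floor_le w; linarith
  have hu1 : u ≤ 1 := by
    have := Int.lt_floor_add_one w; linarith
  set S1 := ∑ i ∈ Finset.range n, (l i) ^ 2 * (a i + c i * ((⌊w⌋ : ℝ) - w)) ^ 2 with hS1
  set S2 := ∑ i ∈ Finset.range n, (l i) ^ 2 * (a i + c i * (((⌊w⌋ : ℝ) + 1) - w)) ^ 2 with hS2
  have hmin : min S1 S2 ≤ (1 - u) * S1 + u * S2 := by
    have h1 : min S1 S2 ≤ S1 := min_le_left _ _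
    have h2 : min S1 S2 ≤ S2 := min_le_right _ _
    nlinarith
  refine hmin.trans_eq ?_
  rw [hS1, hS2, Finset.mul_sum, Finset.mul_sum, ← Finset.sum_add_distrib,
    Finset.sum_mul, ← Finset.sum_add_distrib]
  refine Finset.sum_congr rfl fun i _ => ?_
  have : ((⌊w⌋ : ℝ) - w) = -u := by rw [hu]; ring
  rw [this]
  have : (((⌊w⌋ : ℝ) + 1) - w) = 1 - u := by rw [hu]; ring
  rw [this]
  ring
end

section
/- Suppose w₁,…,w_p ∈ ℝ and integers w⁺₁,…,w⁺_p are chosen sequentially so that for each k, w⁺_k ∈ argmin over v ∈ {⌊w_k⌋, ⌈w_k⌉} of Σ_{i=1}^n l_i² (Σ_{j=1}^{k-1} x_{ij}(w⁺_j - w_j) + x_{ik}(v - w_k))². Then for every k ≤ p: Σ_{i=1}^n l_i² (Σ_{j=1}^k x_{ij}(w⁺_j - w_j))² ≤ Σ_{i=1}^n Σ_{j=1}^k l_i² x_{ij}² u_j (1 - u_j), where u_j = w_j - ⌊w_j⌋. -/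
/-- Sequential rounding invariant: if each coordinate w⁺_k is chosen among
{⌊w_k⌋, ⌈w_k⌉} minimizing the partial weighted squared error, then for every k ≤ p,
Σ_i l_i² (Σ_{j<k} x_{ij}(w⁺_j - w_j))² ≤ Σ_i Σ_{j<k} l_i² x_{ij}² u_j(1-u_j). -/
theorem sequential_rounding_invariant (n p : ℕ) (x : ℕ → ℕ → ℝ) (l : ℕ → ℝ)
    (w : ℕ → ℝ) (wp : ℕ → ℤ)
    (hmem : ∀ k < p, wp k = ⌊w k⌋ ∨ wp k = ⌈w k⌉)
    (hmin : ∀ k < p, ∀ v ∈ ({⌊w k⌋, ⌈w k⌉} : Set ℤ),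
      ∑ i ∈ Finset.range n, (l i) ^ 2 *
        ((∑ j ∈ Finset.range k, x i j * ((wp j : ℝ) - w j)) + x i k * ((wp k : ℝ) - w k)) ^ 2
      ≤ ∑ i ∈ Finset.range n, (l i) ^ 2 *
        ((∑ j ∈ Finset.range k, x i j * ((wp j : ℝ) - w j)) + x i k * ((v : ℝ) - w k)) ^ 2) :
    ∀ k ≤ p,
      ∑ i ∈ Finset.range n, (l i) ^ 2 *
        (∑ j ∈ Finset.range k, x i j * ((wp j : ℝ) - w j)) ^ 2
      ≤ ∑ i ∈ Finset.range n, ∑ j ∈ Finset.range k,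
          (l i) ^ 2 * (x i j) ^ 2 * ((w j - ⌊w j⌋) * (1 - (w j - ⌊w j⌋))) := by
  intro k
  induction k with
  | zero => intro _; simp
  | succ k ih =>
    intro hk
    have hkp : k < p := hk
    have ih' := ih (le_of_lt hkp)
    set u : ℝ := w k - ⌊w k⌋ with hu
    have hu0 : 0 ≤ u := by
      have := Int.floor_le (w k); rw [hu]; linarith
    have hu1 : u ≤ 1 := by
      have := Int.lt_floor_add_one (w k); rw [hu]; linarith
    have hfloor := hmin k hkp ⌊w k⌋ (by left; rfl)
    have hceil := hmin k hkp ⌈w k⌉ (by right; rfl)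
    have hfl : (⌊w k⌋ : ℝ) = w k - u := by rw [hu]; ring
    have key : ∑ i ∈ Finset.range n, (l i) ^ 2 *
        ((∑ j ∈ Finset.range k, x i j * ((wp j : ℝ) - w j)) + x i k * ((wp k : ℝ) - w k)) ^ 2
        ≤ (∑ i ∈ Finset.range n, (l i) ^ 2 *
            (∑ j ∈ Finset.range k, x i j * ((wp j : ℝ) - w j)) ^ 2)
          + ∑ i ∈ Finset.range n, (l i) ^ 2 * (x i k) ^ 2 * (u * (1 - u)) := by
      by_cases hc : ⌈w k⌉ = ⌊w k⌋
      · have hw : w k = (⌊w k⌋ : ℝ) := by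
          have h1 := Int.floor_le (w k)
          have h2 := Int.le_ceil (w k)
          rw [hc] at h2
          linarith
        have hu0' : u = 0 := by rw [hu, hw]; simp
        calc ∑ i ∈ Finset.range n, (l i) ^ 2 *
              ((∑ j ∈ Finset.range k, x i j * ((wp j : ℝ) - w j)) + x i k * ((wp k : ℝ) - w k)) ^ 2
            ≤ ∑ i ∈ Finset.range n, (l i) ^ 2 *
              ((∑ j ∈ Finset.range k, x i j * ((wp j : ℝ) - w j)) + x i k * ((⌊w k⌋ : ℝ) - w k)) ^ 2 := hfloor
          _ = ∑ i ∈ Finset.range n, (l i) ^ 2 *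
              (∑ j ∈ Finset.range k, x i j * ((wp j : ℝ) - w j)) ^ 2 := by
              apply Finset.sum_congr rfl
              intro i _
              rw [← hw]
              ring
          _ ≤ _ := by
              rw [hu0']
              simp
      · have hc1 : (⌈w k⌉ : ℝ) = w k - u + 1 := by
          have h1 := Int.ceil_le_floor_add_one (w k)
          have h2 := Int.floor_le_ceil (w k)
          have : ⌈w k⌉ = ⌊w k⌋ + 1 := by omega
          rw [this]; push_cast; rw [hfl]
        calc ∑ i ∈ Finset.range n, (l i) ^ 2 *
              ((∑ j ∈ Finset.range k, x i j * ((wp j : ℝ) - w j)) + x i k * ((wp k : ℝ) - w k)) ^ 2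
            = (1 - u) * (∑ i ∈ Finset.range n, (l i) ^ 2 *
              ((∑ j ∈ Finset.range k, x i j * ((wp j : ℝ) - w j)) + x i k * ((wp k : ℝ) - w k)) ^ 2)
            + u * (∑ i ∈ Finset.range n, (l i) ^ 2 *
              ((∑ j ∈ Finset.range k, x i j * ((wp j : ℝ) - w j)) + x i k * ((wp k : ℝ) - w k)) ^ 2) := by ring
          _ ≤ (1 - u) * (∑ i ∈ Finset.range n, (l i) ^ 2 *
              ((∑ j ∈ Finset.range k, x i j * ((wp j : ℝ) - w j)) + x i k * ((⌊w k⌋ : ℝ) - w k)) ^ 2)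
            + u * (∑ i ∈ Finset.range n, (l i) ^ 2 *
              ((∑ j ∈ Finset.range k, x i j * ((wp j : ℝ) - w j)) + x i k * ((⌈w k⌉ : ℝ) - w k)) ^ 2) :=
              add_le_add (mul_le_mul_of_nonneg_left hfloor (by linarith))
                (mul_le_mul_of_nonneg_left hceil hu0)
          _ = _ := by
              rw [Finset.mul_sum, Finset.mul_sum, ← Finset.sum_add_distrib,
                ← Finset.sum_add_distrib]
              apply Finset.sum_congr rfl
              intro i _
              rw [hc1, hfl]
              ring
    calc ∑ i ∈ Finset.range n, (l i) ^ 2 *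
          (∑ j ∈ Finset.range (k + 1), x i j * ((wp j : ℝ) - w j)) ^ 2
        = ∑ i ∈ Finset.range n, (l i) ^ 2 *
          ((∑ j ∈ Finset.range k, x i j * ((wp j : ℝ) - w j)) + x i k * ((wp k : ℝ) - w k)) ^ 2 := by
          simp only [Finset.sum_range_succ]
      _ ≤ (∑ i ∈ Finset.range n, (l i) ^ 2 *
            (∑ j ∈ Finset.range k, x i j * ((wp j : ℝ) - w j)) ^ 2)
          + ∑ i ∈ Finset.range n, (l i) ^ 2 * (x i k) ^ 2 * (u * (1 - u)) := key
      _ ≤ (∑ i ∈ Finset.range n, ∑ j ∈ Finset.range k,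
            (l i) ^ 2 * (x i j) ^ 2 * ((w j - ⌊w j⌋) * (1 - (w j - ⌊w j⌋))))
          + ∑ i ∈ Finset.range n, (l i) ^ 2 * (x i k) ^ 2 * (u * (1 - u)) :=
          add_le_add_left ih' _
      _ = _ := by
          rw [← Finset.sum_add_distrib]
          apply Finset.sum_congr rfl
          intro i _
          rw [Finset.sum_range_succ]
end

section
/- Let L(w) = Σ_{i=1}^n log(1 + exp(-y_i ⟨x_i, w⟩)) with y_i ∈ {-1, +1} and x_i ∈ ℝ^p. Suppose w, w⁺ ∈ ℝ^p satisfy ⌊w_j⌋ ≤ w⁺_j ≤ ⌈w_j⌉ componentwise (interpreting ⌈w_j⌉ = ⌊w_j⌋+1 when w_j ∉ ℤ and ⌈w_j⌉ = w_j otherwise). Define γ_{ij} = ⌊w_j⌋ if y_i x_{ij} > 0 and γ_{ij} = ⌈w_j⌉ otherwise, and l_i = 1/(1 + exp(y_i ⟨x_i, γ_i⟩)). Then y_i ⟨x_i, w⁺⟩ ≥ y_i ⟨x_i, γ_i⟩ for every i, and L(w⁺) - L(w) ≤ Σ_{i=1}^n l_i |y_i ⟨x_i, w⁺ - w⟩|.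 -/
open Real Finset

lemma corner_le_aux (yi : ℝ) (xi : ℕ → ℝ) (w v : ℕ → ℝ) (p : ℕ)
    (hlb : ∀ j, (⌊w j⌋ : ℝ) ≤ v j) (hub : ∀ j, v j ≤ (⌈w j⌉ : ℝ)) :
    yi * ∑ j ∈ Finset.range p, xi j *
        (if 0 < yi * xi j then (⌊w j⌋ : ℝ) else (⌈w j⌉ : ℝ))
      ≤ yi * ∑ j ∈ Finset.range p, xi j * v j := by
  rw [Finset.mul_sum, Finset.mul_sum]
  apply Finset.sum_le_sum
  intro j _
  by_cases h : 0 < yi * xi j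
  · simp only [if_pos h]
    have := hlb j
    nlinarith
  · simp only [if_neg h]
    push_neg at h
    have := hub j
    nlinarith

lemma log_exp_lipschitz (c a b : ℝ) (ha : c ≤ a) (hb : c ≤ b) :
    Real.log (1 + Real.exp (-b)) - Real.log (1 + Real.exp (-a))
      ≤ (1 / (1 + Real.exp c)) * |b - a| := by
  set f : ℝ → ℝ := fun t => Real.log (1 + Real.exp (-t)) with hf
  set f' : ℝ → ℝ := fun t => -Real.exp (-t) / (1 + Real.exp (-t)) with hf'
  have hderiv : ∀ t ∈ Set.Ici c, HasDerivWithinAt f (f' t) (Set.Ici c) t := by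
    intro t _
    have h1 : HasDerivAt (fun t : ℝ => 1 + Real.exp (-t)) (-Real.exp (-t)) t := by
      have := (Real.hasDerivAt_exp (-t)).comp t (hasDerivAt_neg t)
      simpa using (this.const_add 1)
    have hpos : 1 + Real.exp (-t) ≠ 0 := by positivity
    exact (h1.log hpos).hasDerivWithinAt
  have hbound : ∀ t ∈ Set.Ici c, ‖f' t‖ ≤ 1 / (1 + Real.exp c) := by
    intro t ht
    have hpos : 0 < 1 + Real.exp (-t) := by positivity
    have h1 : ‖f' t‖ = Real.exp (-t) / (1 + Real.exp (-t)) := by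
      rw [hf', Real.norm_eq_abs, abs_div, abs_of_pos hpos, abs_neg,
        abs_of_pos (Real.exp_pos _)]
    rw [h1]
    have h2 : Real.exp (-t) / (1 + Real.exp (-t)) = 1 / (1 + Real.exp t) := by
      rw [div_eq_div_iff hpos.ne' (by positivity)]
      have := Real.exp_neg t
      have he : Real.exp (-t) * Real.exp t = 1 := by
        rw [← Real.exp_add]; simp
      ring_nf
      nlinarith [Real.exp_pos t, Real.exp_pos (-t)]
    rw [h2]
    apply one_div_le_one_div_of_le (by positivity)
    have := Real.exp_le_exp.mpr ht
    linarith
  have key := Convex.norm_image_sub_le_of_norm_hasDerivWithin_le hderiv hbound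
    (convex_Ici c) (Set.mem_Ici.mpr ha) (Set.mem_Ici.mpr hb)
  calc f b - f a ≤ ‖f b - f a‖ := le_abs_self _
    _ ≤ (1 / (1 + Real.exp c)) * ‖b - a‖ := key
    _ = (1 / (1 + Real.exp c)) * |b - a| := by rw [Real.norm_eq_abs]

/-- If w⁺ lies componentwise in [⌊w_j⌋, ⌈w_j⌉], with γ_{ij} the corner of the
hypercube minimizing y_i⟨x_i,·⟩ and l_i = 1/(1+exp(y_i⟨x_i,γ_i⟩)), then
y_i⟨x_i,w⁺⟩ ≥ y_i⟨x_i,γ_i⟩ for all i, and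
L(w⁺) - L(w) ≤ Σ_i l_i |y_i ⟨x_i, w⁺ - w⟩|. -/
theorem logistic_loss_hypercube_lipschitz_bound (n p : ℕ) (x : ℕ → ℕ → ℝ) (y : ℕ → ℝ)
    (hy : ∀ i, y i = 1 ∨ y i = -1) (w wp : ℕ → ℝ)
    (hlb : ∀ j, (⌊w j⌋ : ℝ) ≤ wp j) (hub : ∀ j, wp j ≤ (⌈w j⌉ : ℝ)) :
    (∀ i, y i * ∑ j ∈ Finset.range p, x i j *
        (if 0 < y i * x i j then (⌊w j⌋ : ℝ) else (⌈w j⌉ : ℝ))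
      ≤ y i * ∑ j ∈ Finset.range p, x i j * wp j) ∧
    (∑ i ∈ Finset.range n, Real.log (1 + Real.exp (-(y i) * ∑ j ∈ Finset.range p, x i j * wp j)))
      - (∑ i ∈ Finset.range n, Real.log (1 + Real.exp (-(y i) * ∑ j ∈ Finset.range p, x i j * w j)))
    ≤ ∑ i ∈ Finset.range n,
        (1 / (1 + Real.exp (y i * ∑ j ∈ Finset.range p, x i j *
          (if 0 < y i * x i j then (⌊w j⌋ : ℝ) else (⌈w j⌉ : ℝ))))) *
        |y i * ∑ j ∈ Finset.range p, x i j * (wp j - w j)| := by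
  constructor
  · intro i
    exact corner_le_aux (y i) (x i) w wp p hlb hub
  · rw [← Finset.sum_sub_distrib]
    apply Finset.sum_le_sum
    intro i _
    set c := y i * ∑ j ∈ Finset.range p, x i j *
        (if 0 < y i * x i j then (⌊w j⌋ : ℝ) else (⌈w j⌉ : ℝ)) with hc
    set a := y i * ∑ j ∈ Finset.range p, x i j * w j with ha
    set b := y i * ∑ j ∈ Finset.range p, x i j * wp j with hb
    have hca : c ≤ a := corner_le_aux (y i) (x i) w w p
      (fun j => Int.floor_le (w j)) (fun j => Int.le_ceil (w j))
    have hcb : c ≤ b := corner_le_aux (y i) (x i) w wp p hlb hub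
    have hdiff : y i * ∑ j ∈ Finset.range p, x i j * (wp j - w j) = b - a := by
      rw [hb, ha, ← mul_sub, ← Finset.sum_sub_distrib]
      congr 1
      apply Finset.sum_congr rfl
      intro j _
      ring
    have h1 : -(y i) * ∑ j ∈ Finset.range p, x i j * wp j = -b := by rw [hb]; ring
    have h2 : -(y i) * ∑ j ∈ Finset.range p, x i j * w j = -a := by rw [ha]; ring
    rw [h1, h2, hdiff]
    exact log_exp_lipschitz c a b hca hcb
end

section
/- Let L(w) = Σ_{i=1}^n log(1 + exp(-y_i ⟨x_i, w⟩)) with y_i ∈ {-1,+1}. Let w ∈ ℝ^p, let u_j = w_j - ⌊w_j⌋, define γ_{ij} = ⌊w_j⌋ if y_i x_{ij} > 0 and γ_{ij} = ⌈w_j⌉ otherwise, and l_i = 1/(1 + exp(y_i ⟨x_i, γ_i⟩)). Suppose the integer vector w⁺ ∈ ℤ^p is produced by sequentially rounding each coordinate of w to ⌊w_j⌋ or ⌈w_j⌉, at each step choosing the coordinate-value pair minimizing Σ_i l_i² (⟨x_i, w⁺_{partial} - w⟩)². Then L(w⁺) - L(w) ≤ √(n Σ_{i=1}^n Σ_{j=1}^p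 (l_i x_{ij})² u_j (1 - u_j)). -/
open Finset

/-- MVT bound for the logistic loss on `[m, ∞)`. -/
lemma fr_logistic_lip (m a b : ℝ) (ha : m ≤ a) (hb : m ≤ b) :
    Real.log (1 + Real.exp (-b)) - Real.log (1 + Real.exp (-a))
      ≤ (1 / (1 + Real.exp m)) * |b - a| := by
  have hderiv : ∀ t : ℝ, HasDerivAt (fun s => Real.log (1 + Real.exp (-s)))
      (-Real.exp (-t) / (1 + Real.exp (-t))) t := by
    intro t
    have h1 : HasDerivAt (fun s : ℝ => 1 + Real.exp (-s)) (Real.exp (-t) * (-1)) t := by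
      have h0 : HasDerivAt (fun s : ℝ => Real.exp (-s)) (Real.exp (-t) * (-1)) t :=
        ((hasDerivAt_id t).neg).exp
      simpa using h0.const_add 1
    have h2 := h1.log (by positivity)
    simpa [neg_div] using h2
  have bound : ∀ t ∈ Set.Ici m,
      ‖-Real.exp (-t) / (1 + Real.exp (-t))‖ ≤ 1 / (1 + Real.exp m) := by
    intro t ht
    have ht' : m ≤ t := ht
    rw [Real.norm_eq_abs, abs_div, abs_neg, abs_of_pos (Real.exp_pos _),
      abs_of_pos (by positivity : (0:ℝ) < 1 + Real.exp (-t))]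
    rw [div_le_div_iff₀ (by positivity) (by positivity)]
    have h1 : Real.exp (-t) * Real.exp m = Real.exp (m - t) := by
      rw [← Real.exp_add]; ring_nf
    have h2 : Real.exp (m - t) ≤ 1 := Real.exp_le_one_iff.2 (by linarith)
    nlinarith [Real.exp_pos (-t)]
  have key := Convex.norm_image_sub_le_of_norm_hasDerivWithin_le
    (f := fun s => Real.log (1 + Real.exp (-s)))
    (f' := fun t => -Real.exp (-t) / (1 + Real.exp (-t)))
    (fun t _ => (hderiv t).hasDerivWithinAt) bound (convex_Ici m)
    (Set.mem_Ici.2 ha) (Set.mem_Ici.2 hb)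
  rw [Real.norm_eq_abs, Real.norm_eq_abs] at key
  exact (le_abs_self _).trans key

lemma fr_sum_sqrt_le (n : ℕ) (b : ℕ → ℝ) (hb : ∀ i, 0 ≤ b i) :
    ∑ i ∈ range n, Real.sqrt (b i) ≤ Real.sqrt (n * ∑ i ∈ range n, b i) := by
  have h := Finset.sum_mul_sq_le_sq_mul_sq (Finset.range n) (fun _ => (1:ℝ))
    (fun i => Real.sqrt (b i))
  simp only [one_mul, one_pow, Finset.sum_const, Finset.card_range, nsmul_eq_mul, mul_one] at h
  have hs : ∀ i ∈ range n, Real.sqrt (b i) ^ 2 = b i := fun i _ => Real.sq_sqrt (hb i)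
  rw [Finset.sum_congr rfl hs] at h
  have h0 : 0 ≤ ∑ i ∈ range n, Real.sqrt (b i) :=
    Finset.sum_nonneg fun i _ => Real.sqrt_nonneg _
  calc ∑ i ∈ range n, Real.sqrt (b i)
      = Real.sqrt ((∑ i ∈ range n, Real.sqrt (b i)) ^ 2) := (Real.sqrt_sq h0).symm
    _ ≤ Real.sqrt (n * ∑ i ∈ range n, b i) := Real.sqrt_le_sqrt h

/-- Sequential rounding invariant. -/
lemma fr_main_aux (n p : ℕ) (x : ℕ → ℕ → ℝ) (w : ℕ → ℝ) (wp : ℕ → ℤ) (l : ℕ → ℝ)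
    (hmin : ∀ k < p, ∀ v ∈ ({⌊w k⌋, ⌈w k⌉} : Set ℤ),
      ∑ i ∈ Finset.range n, (l i) ^ 2 *
        ((∑ j ∈ Finset.range k, x i j * ((wp j : ℝ) - w j)) + x i k * ((wp k : ℝ) - w k)) ^ 2
      ≤ ∑ i ∈ Finset.range n, (l i) ^ 2 *
        ((∑ j ∈ Finset.range k, x i j * ((wp j : ℝ) - w j)) + x i k * ((v : ℝ) - w k)) ^ 2) :
    ∀ k, k ≤ p →
      ∑ i ∈ Finset.range n, (l i) ^ 2 * (∑ j ∈ Finset.range k, x i j * ((wp j : ℝ) - w j)) ^ 2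
        ≤ ∑ i ∈ Finset.range n, ∑ j ∈ Finset.range k,
            (l i * x i j) ^ 2 * ((w j - ⌊w j⌋) * (1 - (w j - ⌊w j⌋))) := by
  intro k
  induction k with
  | zero => simp
  | succ k ih =>
    intro hk
    have hkp : k < p := hk
    have ihk := ih (Nat.le_of_lt hkp)
    simp only [Finset.sum_range_succ]
    set u : ℝ := w k - (⌊w k⌋ : ℝ) with hu
    have hu0 : 0 ≤ u := by rw [hu]; linarith [Int.floor_le (w k)]
    have hu1 : u ≤ 1 := by rw [hu]; linarith [Int.lt_floor_add_one (w k)]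
    set F : ℝ → ℝ := fun d => ∑ i ∈ Finset.range n, (l i) ^ 2 *
      ((∑ j ∈ Finset.range k, x i j * ((wp j : ℝ) - w j)) + x i k * d) ^ 2 with hF
    have hA : F ((wp k : ℝ) - w k) ≤ F ((⌊w k⌋ : ℝ) - w k) :=
      hmin k hkp ⌊w k⌋ (by simp)
    have hB : F ((wp k : ℝ) - w k) ≤ F ((⌈w k⌉ : ℝ) - w k) :=
      hmin k hkp ⌈w k⌉ (by simp)
    have comb : F ((wp k : ℝ) - w k)
        ≤ (1 - u) * F ((⌊w k⌋ : ℝ) - w k) + u * F ((⌈w k⌉ : ℝ) - w k) := by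
      have h1 := mul_le_mul_of_nonneg_left hA (by linarith : (0:ℝ) ≤ 1 - u)
      have h2 := mul_le_mul_of_nonneg_left hB hu0
      nlinarith
    have hfl : (⌊w k⌋ : ℝ) - w k = -u := by rw [hu]; ring
    have comb_eq : (1 - u) * F ((⌊w k⌋ : ℝ) - w k) + u * F ((⌈w k⌉ : ℝ) - w k)
        = ∑ i ∈ Finset.range n, ((l i) ^ 2 *
            (∑ j ∈ Finset.range k, x i j * ((wp j : ℝ) - w j)) ^ 2
          + (l i * x i k) ^ 2 * (u * (1 - u))) := by
      by_cases hint : (⌈w k⌉ : ℤ) = ⌊w k⌋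
      · have hu_eq : u = 0 := by
          have h1 : w k ≤ (⌈w k⌉ : ℝ) := Int.le_ceil _
          have h2 : ((⌈w k⌉ : ℤ) : ℝ) = ((⌊w k⌋ : ℤ) : ℝ) := by exact_mod_cast hint
          have h3 : (⌊w k⌋ : ℝ) ≤ w k := Int.floor_le _
          rw [hu]; linarith [h2 ▸ h1]
        have hcel : (⌈w k⌉ : ℝ) - w k = -u := by
          have h2 : ((⌈w k⌉ : ℤ) : ℝ) = ((⌊w k⌋ : ℤ) : ℝ) := by exact_mod_cast hint
          rw [h2, hfl]
        rw [hfl, hcel, hF]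
        simp only
        rw [Finset.mul_sum, Finset.mul_sum, ← Finset.sum_add_distrib]
        refine Finset.sum_congr rfl fun i _ => ?_
        rw [hu_eq]; ring
      · have hceil : (⌈w k⌉ : ℝ) = (⌊w k⌋ : ℝ) + 1 := by
          have h1 : ⌈w k⌉ ≤ ⌊w k⌋ + 1 := by
            apply Int.ceil_le.mpr
            push_cast
            linarith [Int.lt_floor_add_one (w k)]
          have h2 : ⌊w k⌋ ≤ ⌈w k⌉ := Int.floor_le_ceil _
          have h3 : (⌈w k⌉ : ℤ) = ⌊w k⌋ + 1 := by omega
          exact_mod_cast h3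
        have hcel : (⌈w k⌉ : ℝ) - w k = 1 - u := by rw [hceil, hu]; ring
        rw [hfl, hcel, hF]
        simp only
        rw [Finset.mul_sum, Finset.mul_sum, ← Finset.sum_add_distrib]
        refine Finset.sum_congr rfl fun i _ => ?_
        ring
    calc ∑ i ∈ Finset.range n, (l i) ^ 2 *
          ((∑ j ∈ Finset.range k, x i j * ((wp j : ℝ) - w j)) + x i k * ((wp k : ℝ) - w k)) ^ 2
        = F ((wp k : ℝ) - w k) := rfl
      _ ≤ ∑ i ∈ Finset.range n, ((l i) ^ 2 *
            (∑ j ∈ Finset.range k, x i j * ((wp j : ℝ) - w j)) ^ 2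
          + (l i * x i k) ^ 2 * (u * (1 - u))) := comb.trans comb_eq.le
      _ = (∑ i ∈ Finset.range n, (l i) ^ 2 *
            (∑ j ∈ Finset.range k, x i j * ((wp j : ℝ) - w j)) ^ 2)
          + ∑ i ∈ Finset.range n, (l i * x i k) ^ 2 * (u * (1 - u)) :=
          Finset.sum_add_distrib
      _ ≤ (∑ i ∈ Finset.range n, ∑ j ∈ Finset.range k,
            (l i * x i j) ^ 2 * ((w j - ⌊w j⌋) * (1 - (w j - ⌊w j⌋))))
          + ∑ i ∈ Finset.range n, (l i * x i k) ^ 2 * (u * (1 - u)) := by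
          exact add_le_add_left ihk _
      _ = ∑ i ∈ Finset.range n, ((∑ j ∈ Finset.range k,
            (l i * x i j) ^ 2 * ((w j - ⌊w j⌋) * (1 - (w j - ⌊w j⌋))))
          + (l i * x i k) ^ 2 * ((w k - ⌊w k⌋) * (1 - (w k - ⌊w k⌋)))) := by
          rw [← Finset.sum_add_distrib]

/-- FasterRisk rounding theorem (Theorem 1): if the integer vector w⁺ is produced by
sequentially rounding each coordinate of w to ⌊w_j⌋ or ⌈w_j⌉, at each step choosing the
value minimizing the auxiliary weighted squared error with weights
l_i = 1/(1+exp(y_i ⟨x_i, γ_i⟩)), γ_{ij} = ⌊w_j⌋ if y_i x_{ij} > 0 else ⌈w_j⌉, then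
L(w⁺) - L(w) ≤ √(n Σ_i Σ_j (l_i x_{ij})² u_j (1-u_j)) where u_j = w_j - ⌊w_j⌋. -/
theorem auxiliaryLossRounding_bound (n p : ℕ) (x : ℕ → ℕ → ℝ) (y : ℕ → ℝ)
    (hy : ∀ i, y i = 1 ∨ y i = -1) (w : ℕ → ℝ) (wp : ℕ → ℤ)
    (hmem : ∀ j < p, wp j = ⌊w j⌋ ∨ wp j = ⌈w j⌉)
    (hmin : ∀ k < p, ∀ v ∈ ({⌊w k⌋, ⌈w k⌉} : Set ℤ),
      ∑ i ∈ Finset.range n,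
        (1 / (1 + Real.exp (y i * ∑ j' ∈ Finset.range p, x i j' *
          (if 0 < y i * x i j' then (⌊w j'⌋ : ℝ) else (⌈w j'⌉ : ℝ))))) ^ 2 *
        ((∑ j ∈ Finset.range k, x i j * ((wp j : ℝ) - w j)) + x i k * ((wp k : ℝ) - w k)) ^ 2
      ≤ ∑ i ∈ Finset.range n,
        (1 / (1 + Real.exp (y i * ∑ j' ∈ Finset.range p, x i j' *
          (if 0 < y i * x i j' then (⌊w j'⌋ : ℝ) else (⌈w j'⌉ : ℝ))))) ^ 2 *
        ((∑ j ∈ Finset.range k, x i j * ((wp j : ℝ) - w j)) + x i k * ((v : ℝ) - w k)) ^ 2) :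
    (∑ i ∈ Finset.range n, Real.log (1 + Real.exp (-(y i) * ∑ j ∈ Finset.range p, x i j * (wp j : ℝ))))
      - (∑ i ∈ Finset.range n, Real.log (1 + Real.exp (-(y i) * ∑ j ∈ Finset.range p, x i j * w j)))
    ≤ Real.sqrt (n * ∑ i ∈ Finset.range n, ∑ j ∈ Finset.range p,
        ((1 / (1 + Real.exp (y i * ∑ j' ∈ Finset.range p, x i j' *
          (if 0 < y i * x i j' then (⌊w j'⌋ : ℝ) else (⌈w j'⌉ : ℝ))))) * x i j) ^ 2 *
        ((w j - ⌊w j⌋) * (1 - (w j - ⌊w j⌋)))) := by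
  set l : ℕ → ℝ := fun i => 1 / (1 + Real.exp (y i * ∑ j' ∈ Finset.range p, x i j' *
      (if 0 < y i * x i j' then (⌊w j'⌋ : ℝ) else (⌈w j'⌉ : ℝ)))) with hl
  have hlnn : ∀ i, 0 ≤ l i := by
    intro i; rw [hl]; positivity
  have key : ∑ i ∈ Finset.range n, (l i) ^ 2 *
        (∑ j ∈ Finset.range p, x i j * ((wp j : ℝ) - w j)) ^ 2
      ≤ ∑ i ∈ Finset.range n, ∑ j ∈ Finset.range p,
        (l i * x i j) ^ 2 * ((w j - ⌊w j⌋) * (1 - (w j - ⌊w j⌋))) :=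
    fr_main_aux n p x w wp l hmin p le_rfl
  have step_a : ∀ i ∈ Finset.range n,
      Real.log (1 + Real.exp (-(y i) * ∑ j ∈ Finset.range p, x i j * (wp j : ℝ)))
        - Real.log (1 + Real.exp (-(y i) * ∑ j ∈ Finset.range p, x i j * w j))
      ≤ Real.sqrt ((l i) ^ 2 * (∑ j ∈ Finset.range p, x i j * ((wp j : ℝ) - w j)) ^ 2) := by
    intro i _
    have hfloor_le : ∀ j, (⌊w j⌋ : ℝ) ≤ (⌈w j⌉ : ℝ) := fun j => by
      exact_mod_cast Int.floor_le_ceil (w j)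
    have hmt : y i * (∑ j' ∈ Finset.range p, x i j' *
          (if 0 < y i * x i j' then (⌊w j'⌋ : ℝ) else (⌈w j'⌉ : ℝ)))
        ≤ y i * ∑ j ∈ Finset.range p, x i j * w j := by
      rw [Finset.mul_sum, Finset.mul_sum]
      refine Finset.sum_le_sum fun j _ => ?_
      rw [← mul_assoc, ← mul_assoc]
      by_cases h : 0 < y i * x i j
      · simp only [if_pos h]
        exact mul_le_mul_of_nonneg_left (Int.floor_le (w j)) h.le
      · simp only [if_neg h]
        exact mul_le_mul_of_nonpos_left (Int.le_ceil (w j)) (not_lt.1 h)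
    have hmtp : y i * (∑ j' ∈ Finset.range p, x i j' *
          (if 0 < y i * x i j' then (⌊w j'⌋ : ℝ) else (⌈w j'⌉ : ℝ)))
        ≤ y i * ∑ j ∈ Finset.range p, x i j * (wp j : ℝ) := by
      rw [Finset.mul_sum, Finset.mul_sum]
      refine Finset.sum_le_sum fun j hj => ?_
      have hj' : j < p := Finset.mem_range.1 hj
      have hfc : (⌊w j⌋ : ℝ) ≤ (wp j : ℝ) ∧ (wp j : ℝ) ≤ (⌈w j⌉ : ℝ) := by
        rcases hmem j hj' with h | h <;> rw [h]
        · exact ⟨le_refl _, hfloor_le j⟩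
        · exact ⟨hfloor_le j, le_refl _⟩
      rw [← mul_assoc, ← mul_assoc]
      by_cases h : 0 < y i * x i j
      · simp only [if_pos h]
        exact mul_le_mul_of_nonneg_left hfc.1 h.le
      · simp only [if_neg h]
        exact mul_le_mul_of_nonpos_left hfc.2 (not_lt.1 h)
    have hlip := fr_logistic_lip _ _ _ hmt hmtp
    have hdiff : y i * (∑ j ∈ Finset.range p, x i j * (wp j : ℝ))
          - y i * (∑ j ∈ Finset.range p, x i j * w j)
        = y i * ∑ j ∈ Finset.range p, x i j * ((wp j : ℝ) - w j) := by
      rw [← mul_sub, ← Finset.sum_sub_distrib]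
      congr 1
      exact Finset.sum_congr rfl fun j _ => by ring
    have habs : |y i * (∑ j ∈ Finset.range p, x i j * (wp j : ℝ))
          - y i * (∑ j ∈ Finset.range p, x i j * w j)|
        = |∑ j ∈ Finset.range p, x i j * ((wp j : ℝ) - w j)| := by
      rw [hdiff, abs_mul]
      rcases hy i with h | h <;> rw [h] <;> simp
    rw [habs] at hlip
    have hli : (1 : ℝ) / (1 + Real.exp (y i * ∑ j' ∈ Finset.range p, x i j' *
        (if 0 < y i * x i j' then (⌊w j'⌋ : ℝ) else (⌈w j'⌉ : ℝ)))) = l i := by rw [hl]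
    rw [hli] at hlip
    have hfin : (l i) * |∑ j ∈ Finset.range p, x i j * ((wp j : ℝ) - w j)|
        = Real.sqrt ((l i) ^ 2 * (∑ j ∈ Finset.range p, x i j * ((wp j : ℝ) - w j)) ^ 2) := by
      rw [show (l i) ^ 2 * (∑ j ∈ Finset.range p, x i j * ((wp j : ℝ) - w j)) ^ 2
          = ((l i) * |∑ j ∈ Finset.range p, x i j * ((wp j : ℝ) - w j)|) ^ 2 by
        rw [mul_pow, sq_abs]]
      rw [Real.sqrt_sq (mul_nonneg (hlnn i) (abs_nonneg _))]
    rw [← hfin]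
    simp only [neg_mul]
    exact hlip
  have hb : ∀ i : ℕ, 0 ≤ (l i) ^ 2 * (∑ j ∈ Finset.range p, x i j * ((wp j : ℝ) - w j)) ^ 2 :=
    fun i => by positivity
  calc (∑ i ∈ Finset.range n, Real.log (1 + Real.exp (-(y i) * ∑ j ∈ Finset.range p, x i j * (wp j : ℝ))))
        - (∑ i ∈ Finset.range n, Real.log (1 + Real.exp (-(y i) * ∑ j ∈ Finset.range p, x i j * w j)))
      = ∑ i ∈ Finset.range n,
          (Real.log (1 + Real.exp (-(y i) * ∑ j ∈ Finset.range p, x i j * (wp j : ℝ)))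
            - Real.log (1 + Real.exp (-(y i) * ∑ j ∈ Finset.range p, x i j * w j))) :=
        (Finset.sum_sub_distrib ..).symm
    _ ≤ ∑ i ∈ Finset.range n, Real.sqrt ((l i) ^ 2 *
          (∑ j ∈ Finset.range p, x i j * ((wp j : ℝ) - w j)) ^ 2) :=
        Finset.sum_le_sum step_a
    _ ≤ Real.sqrt (n * ∑ i ∈ Finset.range n, (l i) ^ 2 *
          (∑ j ∈ Finset.range p, x i j * ((wp j : ℝ) - w j)) ^ 2) :=
        fr_sum_sqrt_le n _ hb
    _ ≤ Real.sqrt (n * ∑ i ∈ Finset.range n, ∑ j ∈ Finset.range p,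
          (l i * x i j) ^ 2 * ((w j - ⌊w j⌋) * (1 - (w j - ⌊w j⌋)))) :=
        Real.sqrt_le_sqrt (mul_le_mul_of_nonneg_left key (Nat.cast_nonneg n))
end
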